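/- arXiv:2102.00620 — 3 statements merged into one kernel-verified Lean document; each statement's English description precedes it below -/
import Mathlib

section
/- Output validity for all valid inputs is equivalent to the projection identity: for a ℂ-linear map M on 2^m × 2^m complex matrices, define the projection superoperator P(X) = ½(X + C X C). Then M ∘ P = P ∘ M ∘ P if and only if for every density matrix ρ (positive semidefinite with trace 1) satisfying C ρ C = ρ, the output satisfies C M(ρ) C = M(ρ). -/
open Matrix
open scoped ComplexOrder

noncomputable section

def σZ : Matrix (Fin 2) (Fin 2) ℂ := !![1, 0; 0, -1]

/-- Parity operator `C = Z^{⊗m}`: diagonal with entry `(-1)^{|n̄|}`. -/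
def parity (m : ℕ) : Matrix (Fin m → Fin 2) (Fin m → Fin 2) ℂ :=
  Matrix.of fun n n' => ∏ j, σZ (n j) (n' j)

/-- The projection superoperator `X ↦ ½(X + P X P)`. -/
def projSup {A : Type*} [Fintype A] (P : Matrix A A ℂ) :
    Matrix A A ℂ →ₗ[ℂ] Matrix A A ℂ where
  toFun X := (1 / 2 : ℂ) • (X + P * X * P)
  map_add' X Y := by
    simp only [Matrix.mul_add, Matrix.add_mul, smul_add]
    module
  map_smul' c X := by
    simp only [Matrix.mul_smul, Matrix.smul_mul, smul_add, smul_smul, mul_comm,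
      RingHom.id_apply]

lemma parity_eq_diagonal (m : ℕ) :
    parity m = Matrix.diagonal (fun n : Fin m → Fin 2 => ∏ j, σZ (n j) (n j)) := by
  ext n n'
  by_cases h : n = n'
  · subst h; simp [parity]
  · obtain ⟨j, hj⟩ : ∃ j, n j ≠ n' j := by
      by_contra hc; push_neg at hc; exact h (funext hc)
    have hz : σZ (n j) (n' j) = 0 := by
      revert hj
      generalize n j = a
      generalize n' j = b
      fin_cases a <;> fin_cases b <;> simp [σZ]
    rw [Matrix.diagonal_apply_ne _ h]
    show (∏ j, σZ (n j) (n' j)) = 0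
    exact Finset.prod_eq_zero (Finset.mem_univ j) hz

lemma σZ_diag_sq (i : Fin 2) : σZ i i * σZ i i = 1 := by
  fin_cases i <;> simp [σZ]

lemma σZ_diag_star (i : Fin 2) : star (σZ i i) = σZ i i := by
  fin_cases i <;> simp [σZ]

lemma parity_mul_self (m : ℕ) : parity m * parity m = 1 := by
  rw [parity_eq_diagonal, Matrix.diagonal_mul_diagonal]
  have hd : ∀ n : Fin m → Fin 2,
      (∏ j, σZ (n j) (n j)) * (∏ j, σZ (n j) (n j)) = 1 := by
    intro n
    rw [← Finset.prod_mul_distrib]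
    simp [σZ_diag_sq]
  rw [show (fun n : Fin m → Fin 2 => (∏ j, σZ (n j) (n j)) * ∏ j, σZ (n j) (n j)) =
      fun _ => (1 : ℂ) from funext hd, Matrix.diagonal_one]

lemma parity_conjTranspose (m : ℕ) : (parity m)ᴴ = parity m := by
  have hs : star (fun n : Fin m → Fin 2 => ∏ j, σZ (n j) (n j)) =
      fun n : Fin m → Fin 2 => ∏ j, σZ (n j) (n j) := by
    funext n
    show star (∏ j, σZ (n j) (n j)) = ∏ j, σZ (n j) (n j)
    rw [star_prod]
    exact Finset.prod_congr rfl fun j _ => σZ_diag_star _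
  rw [parity_eq_diagonal, Matrix.diagonal_conjTranspose, hs]

lemma psd_smul {A : Type*} [Fintype A] [DecidableEq A] {X : Matrix A A ℂ}
    (hX : X.PosSemidef) {c : ℂ} (hc : 0 ≤ c) : (c • X).PosSemidef := by
  obtain ⟨hre, him⟩ := Complex.nonneg_iff.mp hc
  refine Matrix.PosSemidef.of_dotProduct_mulVec_nonneg ?_ ?_
  · unfold Matrix.IsHermitian
    rw [Matrix.conjTranspose_smul, hX.1]
    congr 1
    rw [Complex.star_def, Complex.conj_eq_iff_im]
    exact him.symm
  · intro x
    rw [Matrix.smul_mulVec, dotProduct_smul]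
    exact mul_nonneg hc (hX.dotProduct_mulVec_nonneg x)

lemma psd_trace_nonneg {A : Type*} [Fintype A] [DecidableEq A] {X : Matrix A A ℂ}
    (hX : X.PosSemidef) : 0 ≤ X.trace := by
  rw [Matrix.trace]
  apply Finset.sum_nonneg
  intro i _
  have := hX.dotProduct_mulVec_nonneg (Pi.single i 1)
  simpa [dotProduct, Matrix.mulVec_single, Pi.single_apply, Finset.sum_ite_eq',
    Matrix.diag] using this

/-- A Hermitian matrix plus a large real multiple of the identity is PSD. -/
lemma exists_psd_shift {A : Type*} [Fintype A] [DecidableEq A] [Nonempty A]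
    {X : Matrix A A ℂ} (hX : X.IsHermitian) :
    ∃ t : ℝ, 0 ≤ t ∧ (X + (t : ℂ) • 1).PosSemidef := by
  refine ⟨∑ i, |hX.eigenvalues i|, Finset.sum_nonneg fun i _ => abs_nonneg _, ?_⟩
  set t : ℝ := ∑ i, |hX.eigenvalues i| with ht
  have key : X + (t : ℂ) • 1 =
      (hX.eigenvectorUnitary : Matrix A A ℂ) *
        Matrix.diagonal (fun i => ((hX.eigenvalues i + t : ℝ) : ℂ)) *
        (hX.eigenvectorUnitary : Matrix A A ℂ)ᴴ := by
    have hd : Matrix.diagonal (fun i => ((hX.eigenvalues i + t : ℝ) : ℂ)) =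
        Matrix.diagonal (RCLike.ofReal ∘ hX.eigenvalues) + (t : ℂ) • 1 := by
      ext i j
      rcases eq_or_ne i j with rfl | hij
      · simp only [Matrix.diagonal_apply_eq, Matrix.add_apply, Matrix.smul_apply,
          Matrix.one_apply_eq, Function.comp_apply, smul_eq_mul, mul_one]
        push_cast
        rfl
      · simp [Matrix.diagonal_apply_ne _ hij, Matrix.one_apply_ne hij]
    rw [hd, Matrix.mul_add, Matrix.add_mul]
    congr 1
    · rw [← Matrix.star_eq_conjTranspose]
      exact hX.spectral_theorem
    · rw [Matrix.mul_smul, Matrix.smul_mul, Matrix.mul_one, ← Matrix.star_eq_conjTranspose,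
        (Matrix.mem_unitaryGroup_iff).mp hX.eigenvectorUnitary.2]
  rw [key]
  apply Matrix.PosSemidef.mul_mul_conjTranspose_same
  rw [Matrix.posSemidef_diagonal_iff]
  intro i
  rw [Complex.zero_le_real]
  have : |hX.eigenvalues i| ≤ t :=
    Finset.single_le_sum (fun j _ => abs_nonneg (hX.eigenvalues j)) (Finset.mem_univ i)
  linarith [neg_abs_le (hX.eigenvalues i)]

theorem valid_output_iff_projection_identity (m : ℕ) (hm : 1 ≤ m)
    (M : Matrix (Fin m → Fin 2) (Fin m → Fin 2) ℂ →ₗ[ℂ]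
        Matrix (Fin m → Fin 2) (Fin m → Fin 2) ℂ) :
    (∀ X, M (projSup (parity m) X) = projSup (parity m) (M (projSup (parity m) X))) ↔
      (∀ ρ : Matrix (Fin m → Fin 2) (Fin m → Fin 2) ℂ,
        ρ.PosSemidef → ρ.trace = 1 → parity m * ρ * parity m = ρ →
          parity m * M ρ * parity m = M ρ) := by
  set C := parity m with hC
  have hCC : C * C = 1 := parity_mul_self m
  have hfix : ∀ Y, C * Y * C = Y → projSup C Y = Y := by
    intro Y hY
    show (1 / 2 : ℂ) • (Y + C * Y * C) = Y
    rw [hY]; module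
  constructor
  · intro h ρ hpsd htr hpar
    have h2 := h ρ
    rw [hfix ρ hpar] at h2
    have h3 : (2 : ℂ) • M ρ = M ρ + C * M ρ * C := by
      conv_lhs => rw [h2]
      show (2 : ℂ) • ((1 / 2 : ℂ) • (M ρ + C * M ρ * C)) = _
      rw [smul_smul]; norm_num
    calc C * M ρ * C = (2 : ℂ) • M ρ - M ρ := by rw [h3]; module
    _ = M ρ := by module
  · intro h
    -- key: for every Y with C Y C = Y we get C (M Y) C = M Y
    have key : ∀ Y, C * Y * C = Y → C * M Y * C = M Y := by
      -- first: the identity matrix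
      have hone : C * M 1 * C = M 1 := by
        set N : ℂ := (2 ^ m : ℂ) with hN
        have hNne : N ≠ 0 := by rw [hN]; exact pow_ne_zero _ two_ne_zero
        have hNr : N = (((2:ℝ)^m : ℝ) : ℂ) := by rw [hN]; push_cast; ring
        set σ : Matrix (Fin m → Fin 2) (Fin m → Fin 2) ℂ := N⁻¹ • 1 with hσ
        have hpsd : σ.PosSemidef := by
          apply psd_smul Matrix.PosSemidef.one
          rw [hNr, ← Complex.ofReal_inv, Complex.zero_le_real]
          positivity
        have htr : σ.trace = 1 := by
          rw [hσ, Matrix.trace_smul, Matrix.trace_one]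
          simp only [Fintype.card_fun, Fintype.card_fin]
          rw [smul_eq_mul, hN]
          push_cast
          field_simp
        have hpar : C * σ * C = σ := by
          rw [hσ, Matrix.mul_smul, Matrix.smul_mul, Matrix.mul_one, hCC]
        have := h σ hpsd htr hpar
        have hM1 : M 1 = N • M σ := by
          rw [hσ, _root_.map_smul, smul_smul, mul_inv_cancel₀ hNne, one_smul]
        rw [hM1, Matrix.mul_smul, Matrix.smul_mul, this]
      -- second: Hermitian matrices commuting with C
      have hherm : ∀ H, H.IsHermitian → C * H * C = H → C * M H * C = M H := by
        intro H hH hCH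
        obtain ⟨t, ht0, hpsd0⟩ := exists_psd_shift hH
        set s : ℂ := ((t : ℂ) + 1) with hs
        set A : Matrix (Fin m → Fin 2) (Fin m → Fin 2) ℂ := H + s • 1 with hA
        have hAsum : A = (H + (t : ℂ) • 1) + 1 := by rw [hA, hs]; module
        have hApsd : A.PosSemidef := by
          rw [hAsum]; exact hpsd0.add Matrix.PosSemidef.one
        set c : ℂ := A.trace with hc
        have hc0 : 0 ≤ c := psd_trace_nonneg hApsd
        have hcne : c ≠ 0 := by
          have h1 : c = (H + (t : ℂ) • 1).trace + (2 ^ m : ℂ) := by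
            rw [hc, hAsum, Matrix.trace_add, Matrix.trace_one]
            simp [Fintype.card_fun]
          have h2 := psd_trace_nonneg hpsd0
          obtain ⟨hre, him⟩ := Complex.nonneg_iff.mp h2
          intro hcz
          rw [hcz] at h1
          have := congrArg Complex.re h1.symm
          simp only [Complex.add_re, Complex.zero_re] at this
          have h2m : ((2:ℂ)^m).re = (2:ℝ)^m := by
            rw [show ((2:ℂ)^m) = (((2:ℝ)^m : ℝ) : ℂ) by push_cast; ring]
            exact Complex.ofReal_re _
          rw [h2m] at this
          have h2p : (0:ℝ) < (2:ℝ) ^ m := by positivity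
          linarith
        have hcinv : 0 ≤ c⁻¹ := by
          obtain ⟨hre, him⟩ := Complex.nonneg_iff.mp hc0
          rw [Complex.nonneg_iff]
          constructor
          · rw [Complex.inv_re]
            exact div_nonneg hre (Complex.normSq_nonneg c)
          · rw [Complex.inv_im, ← him]
            simp
        set ρ : Matrix (Fin m → Fin 2) (Fin m → Fin 2) ℂ := c⁻¹ • A with hρ
        have hρpsd : ρ.PosSemidef := psd_smul hApsd hcinv
        have hρtr : ρ.trace = 1 := by
          rw [hρ, Matrix.trace_smul, smul_eq_mul, ← hc, inv_mul_cancel₀ hcne]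
        have hρpar : C * ρ * C = ρ := by
          rw [hρ, hA, Matrix.mul_smul, Matrix.smul_mul]
          congr 1
          rw [Matrix.mul_add, Matrix.add_mul, hCH, Matrix.mul_smul, Matrix.smul_mul,
            Matrix.mul_one, hCC]
        have hout := h ρ hρpsd hρtr hρpar
        have hMH : M H = c • M ρ - s • M 1 := by
          rw [hρ, _root_.map_smul, smul_smul, mul_inv_cancel₀ hcne, one_smul, hA, map_add,
            _root_.map_smul]
          module
        rw [hMH, Matrix.mul_sub, Matrix.sub_mul, Matrix.mul_smul, Matrix.smul_mul,
          Matrix.mul_smul, Matrix.smul_mul, hout, hone]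
      -- general case via Hermitian decomposition
      intro Y hY
      have hCT : Cᴴ = C := parity_conjTranspose m
      have hYH : C * Yᴴ * C = Yᴴ := by
        have := congrArg Matrix.conjTranspose hY
        rwa [Matrix.conjTranspose_mul, Matrix.conjTranspose_mul, hCT,
          ← Matrix.mul_assoc] at this
      set H : Matrix (Fin m → Fin 2) (Fin m → Fin 2) ℂ := (1/2 : ℂ) • (Y + Yᴴ) with hH
      set K : Matrix (Fin m → Fin 2) (Fin m → Fin 2) ℂ :=
        (-(Complex.I)/2 : ℂ) • (Y - Yᴴ) with hK
      clear_value H K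
      have hHherm : H.IsHermitian := by
        unfold Matrix.IsHermitian
        rw [hH, Matrix.conjTranspose_smul, Matrix.conjTranspose_add,
          Matrix.conjTranspose_conjTranspose]
        rw [show star (1/2 : ℂ) = (1/2 : ℂ) by simp]
        rw [add_comm]
      have hKherm : K.IsHermitian := by
        unfold Matrix.IsHermitian
        rw [hK, Matrix.conjTranspose_smul, Matrix.conjTranspose_sub,
          Matrix.conjTranspose_conjTranspose]
        rw [show star (-(Complex.I)/2 : ℂ) = (Complex.I/2 : ℂ) by
          simp [Complex.star_def]]
        module
      have hHpar : C * H * C = H := by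
        rw [hH, Matrix.mul_smul, Matrix.smul_mul, Matrix.mul_add, Matrix.add_mul, hY, hYH]
      have hKpar : C * K * C = K := by
        rw [hK, Matrix.mul_smul, Matrix.smul_mul, Matrix.mul_sub, Matrix.sub_mul, hY, hYH]
      have hdecomp : Y = H + Complex.I • K := by
        rw [hH, hK, smul_smul]
        have hsc : Complex.I * (-(Complex.I)/2) = (1/2 : ℂ) := by
          have h := Complex.I_mul_I
          linear_combination (-1/2 : ℂ) * h
        rw [hsc]
        module
      have hMY : M Y = M H + Complex.I • M K := by
        rw [hdecomp, map_add, _root_.map_smul]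
      calc C * M Y * C = C * (M H + Complex.I • M K) * C := by rw [hMY]
        _ = C * M H * C + Complex.I • (C * M K * C) := by
            rw [Matrix.mul_add, Matrix.add_mul, Matrix.mul_smul, Matrix.smul_mul]
        _ = M H + Complex.I • M K := by rw [hherm H hHherm hHpar, hherm K hKherm hKpar]
        _ = M Y := hMY.symm
    intro X
    have hP : C * projSup C X * C = projSup C X := by
      show C * ((1/2 : ℂ) • (X + C * X * C)) * C = (1/2 : ℂ) • (X + C * X * C)
      rw [Matrix.mul_smul, Matrix.smul_mul]
      congr 1
      rw [Matrix.mul_add, Matrix.add_mul]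
      have hmid : C * (C * X * C) * C = X := by
        have h1 : C * (C * X * C) * C = (C * C) * (X * (C * C)) := by
          simp only [Matrix.mul_assoc]
        rw [h1, hCC, Matrix.one_mul, Matrix.mul_one]
      rw [hmid]
      exact add_comm _ _
    exact (hfix _ (key _ hP)).symm
end
end

section
/- A map on fermion modes is valid according to the superselection rule if and only if its Choi matrix commutes with the doubled parity operator: let M be a ℂ-linear map on 2^m × 2^m complex matrices, and for each integer p ≥ 0 let M ⊗ id_p denote the induced map on 2^{m+p} × 2^{m+p} matrices (acting as M on the first tensor factor), let C_m = Z^{⊗m} and C_p = Z^{⊗p}, and define P_p(X) = ½(X + (C_m ⊗ C_p) X (C_m ⊗ C_p)). Then the condition [(M ⊗ id_p) ∘ P_p = P_p ∘ (M ⊗ id_p) ∘ P_p for all integers p ≥ 0] holds if and only if (C_m ⊗ C_m) Choi(M) = Choi(M) (C_m ⊗ C_m). -/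
open Matrix

noncomputable section

/-- The slice of a matrix on a product index, fixing the second components. -/
def matSlice {A B : Type*} (b b' : B) :
    Matrix (A × B) (A × B) ℂ →ₗ[ℂ] Matrix A A ℂ where
  toFun X := Matrix.of fun a a' => X (a, b) (a', b')
  map_add' _ _ := rfl
  map_smul' _ _ := rfl

/-- The induced map `M ⊗ id` on a composite system. -/
def tensId {A B : Type*} (M : Matrix A A ℂ →ₗ[ℂ] Matrix A A ℂ) :
    Matrix (A × B) (A × B) ℂ →ₗ[ℂ] Matrix (A × B) (A × B) ℂ where
  toFun X := Matrix.of fun p q => M (matSlice p.2 q.2 X) p.1 q.1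
  map_add' X Y := by
    ext ⟨a, b⟩ ⟨a', b'⟩
    simp [Matrix.add_apply, map_add]
  map_smul' c X := by
    ext ⟨a, b⟩ ⟨a', b'⟩
    simp [Matrix.smul_apply, _root_.map_smul]

/-- The (unnormalised) maximally entangled state `|Φ⟩⟨Φ|`,
`Φ = ∑ n̄, |n̄⟩ ⊗ |n̄⟩`. -/
def phiMat (A : Type*) [DecidableEq A] : Matrix (A × A) (A × A) ℂ :=
  Matrix.of fun p q => (if p.1 = p.2 then 1 else 0) * (if q.1 = q.2 then 1 else 0)

/-- The Choi matrix `Choi(M) = (M ⊗ id)(|Φ⟩⟨Φ|)`. -/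
def choi {A : Type*} [DecidableEq A] (M : Matrix A A ℂ →ₗ[ℂ] Matrix A A ℂ) :
    Matrix (A × A) (A × A) ℂ :=
  tensId M (phiMat A)

namespace ValidAux

open Kronecker

/-- The diagonal entry function of the parity matrix. -/
def eps (m : ℕ) (a : Fin m → Fin 2) : ℂ := ∏ j, σZ (a j) (a j)

lemma σZ_diag_pm (i : Fin 2) : σZ i i = 1 ∨ σZ i i = -1 := by
  fin_cases i <;> simp [σZ]

lemma σZ_off {i j : Fin 2} (h : i ≠ j) : σZ i j = 0 := by
  fin_cases i <;> fin_cases j <;> simp_all [σZ]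

lemma eps_sq {m : ℕ} (a : Fin m → Fin 2) : eps m a * eps m a = 1 := by
  rw [eps, ← Finset.prod_mul_distrib]
  refine Finset.prod_eq_one fun j _ => ?_
  rcases σZ_diag_pm (a j) with h | h <;> rw [h] <;> ring

lemma eps_pm {m : ℕ} (a : Fin m → Fin 2) : eps m a = 1 ∨ eps m a = -1 :=
  mul_self_eq_one_iff.mp (eps_sq a)

lemma sq_one_mul {x y : ℂ} (hx : x * x = 1) (hy : y * y = 1) : (x * y) * (x * y) = 1 := by
  linear_combination y * y * hx + hy

lemma pm_cases {x y : ℂ} (hx : x * x = 1) (hy : y * y = 1) : x = y ∨ x = -y := by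
  rcases mul_self_eq_one_iff.mp hx with h | h <;>
    rcases mul_self_eq_one_iff.mp hy with h' | h' <;> rw [h, h'] <;> norm_num

lemma pm_eq_iff {x y z w : ℂ} (hy : y * y = 1) (hz : z * z = 1) :
    x * y = z * w ↔ x * z = y * w := by
  constructor <;> intro h
  · linear_combination y * z * h + y * w * hz - x * z * hy
  · linear_combination z * y * h + z * w * hy - x * y * hz

lemma parity_eq_diagonal (m : ℕ) : parity m = Matrix.diagonal (eps m) := by
  ext a a'
  by_cases h : a = a'
  · subst h; simp [parity, Matrix.diagonal_apply_eq, eps]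
  · rw [Matrix.diagonal_apply_ne _ h]
    exact Finset.prod_eq_zero (Finset.mem_univ (Function.ne_iff.mp h).choose)
      (σZ_off (Function.ne_iff.mp h).choose_spec)

lemma kron_parity (m p : ℕ) :
    parity m ⊗ₖ parity p =
      Matrix.diagonal (fun q : (Fin m → Fin 2) × (Fin p → Fin 2) => eps m q.1 * eps p q.2) := by
  rw [parity_eq_diagonal, parity_eq_diagonal, Matrix.diagonal_kronecker_diagonal]

lemma projSup_diagonal_apply {A : Type*} [Fintype A] [DecidableEq A] (d : A → ℂ)
    (X : Matrix A A ℂ) (i j : A) :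
    projSup (Matrix.diagonal d) X i j = (1 / 2) * (1 + d i * d j) * X i j := by
  simp only [projSup, LinearMap.coe_mk, AddHom.coe_mk, Matrix.smul_apply, Matrix.add_apply,
    Matrix.diagonal_mul, Matrix.mul_diagonal, smul_eq_mul]
  ring

end ValidAux
namespace ValidAux

open Kronecker

variable {m : ℕ}

/-- Entrywise form of the sliced projector. -/
def halfProj (m : ℕ) (s : ℂ) (Y : Matrix (Fin m → Fin 2) (Fin m → Fin 2) ℂ) :
    Matrix (Fin m → Fin 2) (Fin m → Fin 2) ℂ :=
  Matrix.of fun a a' => (1 / 2) * (1 + s * (eps m a * eps m a')) * Y a a'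

lemma matSlice_projSup (m p : ℕ)
    (X : Matrix ((Fin m → Fin 2) × (Fin p → Fin 2)) ((Fin m → Fin 2) × (Fin p → Fin 2)) ℂ)
    (b b' : Fin p → Fin 2) :
    matSlice b b' (projSup
        (Matrix.diagonal fun q : (Fin m → Fin 2) × (Fin p → Fin 2) => eps m q.1 * eps p q.2) X)
      = halfProj m (eps p b * eps p b') (matSlice b b' X) := by
  ext a a'
  show projSup _ X (a, b) (a', b') = (1/2) * _ * X (a, b) (a', b')
  rw [projSup_diagonal_apply]
  ring

lemma halfProj_sum (s : ℂ) (Y : Matrix (Fin m → Fin 2) (Fin m → Fin 2) ℂ) :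
    halfProj m s Y = ∑ b, ∑ b',
      ((1 / 2) * (1 + s * (eps m b * eps m b')) * Y b b') • Matrix.single b b' (1 : ℂ) := by
  ext a a'
  simp [halfProj, Matrix.sum_apply, Matrix.single, ite_and, mul_ite]

lemma matSlice_phi (b b' : Fin m → Fin 2) :
    matSlice b b' (phiMat (Fin m → Fin 2)) = Matrix.single b b' (1 : ℂ) := by
  ext a a'
  simp only [matSlice, phiMat, Matrix.single, LinearMap.coe_mk, AddHom.coe_mk,
    Matrix.of_apply, ite_and, eq_comm]
  by_cases h1 : b = a <;> by_cases h2 : b' = a' <;> simp_all [eq_comm, matSlice]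
  all_goals show (0 : ℂ) = (if a' = b' then if a = b then 1 else 0 else 0); simp [Ne.symm h1]

lemma choi_apply (M : Matrix (Fin m → Fin 2) (Fin m → Fin 2) ℂ →ₗ[ℂ]
      Matrix (Fin m → Fin 2) (Fin m → Fin 2) ℂ) (a b a' b' : Fin m → Fin 2) :
    choi M (a, b) (a', b') = M (Matrix.single b b' (1 : ℂ)) a a' := by
  show M (matSlice b b' (phiMat _)) a a' = _
  rw [matSlice_phi]

end ValidAux
namespace ValidAux

open Kronecker

variable {m : ℕ}
  (M : Matrix (Fin m → Fin 2) (Fin m → Fin 2) ℂ →ₗ[ℂ] Matrix (Fin m → Fin 2) (Fin m → Fin 2) ℂ)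

lemma vanish
    (hK : ∀ b b' a a' : Fin m → Fin 2, eps m a * eps m a' ≠ eps m b * eps m b' →
      M (Matrix.single b b' (1 : ℂ)) a a' = 0)
    {s : ℂ} (hs : s * s = 1) (Y : Matrix (Fin m → Fin 2) (Fin m → Fin 2) ℂ)
    (a a' : Fin m → Fin 2) (h : eps m a * eps m a' = -s) :
    M (halfProj m s Y) a a' = 0 := by
  rw [halfProj_sum, map_sum]
  rw [Matrix.sum_apply]
  refine Finset.sum_eq_zero fun b _ => ?_
  rw [map_sum, Matrix.sum_apply]
  refine Finset.sum_eq_zero fun b' _ => ?_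
  rw [_root_.map_smul, Matrix.smul_apply, smul_eq_mul]
  by_cases he : eps m b * eps m b' = -s
  · rw [he]
    have hc : (1 : ℂ) + s * -s = 0 := by linear_combination -hs
    rw [hc]
    ring
  · rw [hK b b' a a' (by rw [h]; exact fun hh => he hh.symm)]
    ring

lemma commute_iff_K :
    ((parity m ⊗ₖ parity m) * choi M = choi M * (parity m ⊗ₖ parity m)) ↔
      (∀ b b' a a' : Fin m → Fin 2, eps m a * eps m a' ≠ eps m b * eps m b' →
        M (Matrix.single b b' (1 : ℂ)) a a' = 0) := by
  rw [kron_parity]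
  constructor
  · intro h b b' a a' hne
    have he := Matrix.ext_iff.mpr h (a, b) (a', b')
    simp only [Matrix.diagonal_mul, Matrix.mul_diagonal, choi_apply] at he
    have hxy : eps m a * eps m b ≠ eps m a' * eps m b' :=
      fun hh => hne ((pm_eq_iff (eps_sq a') (eps_sq b)).mpr hh)
    have h0 : (eps m a * eps m b - eps m a' * eps m b') *
        M (Matrix.single b b' (1 : ℂ)) a a' = 0 := by linear_combination he
    exact (mul_eq_zero.mp h0).resolve_left (sub_ne_zero.mpr hxy)
  · intro hK
    ext ⟨a, b⟩ ⟨a', b'⟩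
    simp only [Matrix.diagonal_mul, Matrix.mul_diagonal, choi_apply]
    by_cases hc : eps m a * eps m a' = eps m b * eps m b'
    · rw [(pm_eq_iff (eps_sq a') (eps_sq b)).mp hc]
      ring
    · rw [hK b b' a a' hc]
      ring

end ValidAux
namespace ValidAux

variable {m : ℕ}

lemma tensId_apply {B : Type*} (M : Matrix (Fin m → Fin 2) (Fin m → Fin 2) ℂ →ₗ[ℂ]
      Matrix (Fin m → Fin 2) (Fin m → Fin 2) ℂ)
    (Z : Matrix ((Fin m → Fin 2) × B) ((Fin m → Fin 2) × B) ℂ) (a a' : Fin m → Fin 2) (b b' : B) :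
    tensId M Z (a, b) (a', b') = M (matSlice b b' Z) a a' := rfl

lemma halfProj_stdBasis (b b' : Fin m → Fin 2) :
    halfProj m (eps m b * eps m b') (Matrix.single b b' (1 : ℂ)) =
      Matrix.single b b' (1 : ℂ) := by
  ext a a'
  simp only [halfProj, Matrix.of_apply]
  by_cases h1 : b = a
  · by_cases h2 : b' = a'
    · subst h1; subst h2
      rw [Matrix.single_apply_same]
      linear_combination (1 / 2 : ℂ) * sq_one_mul (eps_sq b) (eps_sq b')
    · rw [Matrix.single_apply_of_ne _ _ _ _ _ (by tauto)]; ring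
  · rw [Matrix.single_apply_of_ne _ _ _ _ _ (by tauto)]; ring

end ValidAux

open ValidAux in
open Kronecker in
theorem valid_map_iff_choi_commutes (m : ℕ) (hm : 1 ≤ m)
    (M : Matrix (Fin m → Fin 2) (Fin m → Fin 2) ℂ →ₗ[ℂ]
        Matrix (Fin m → Fin 2) (Fin m → Fin 2) ℂ) :
    (∀ p : ℕ,
      ∀ X : Matrix ((Fin m → Fin 2) × (Fin p → Fin 2))
          ((Fin m → Fin 2) × (Fin p → Fin 2)) ℂ,
        tensId M (projSup (parity m ⊗ₖ parity p) X) =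
          projSup (parity m ⊗ₖ parity p) (tensId M (projSup (parity m ⊗ₖ parity p) X))) ↔
      (parity m ⊗ₖ parity m) * choi M = choi M * (parity m ⊗ₖ parity m) := by
  constructor
  · intro hL
    refine (commute_iff_K M).mpr ?_
    intro b b' a a' hne
    have hs : (eps m b * eps m b') * (eps m b * eps m b') = 1 :=
      sq_one_mul (eps_sq b) (eps_sq b')
    obtain ⟨c, c', hcc⟩ : ∃ c c' : Fin 1 → Fin 2,
        eps 1 c * eps 1 c' = eps m b * eps m b' := by
      rcases mul_self_eq_one_iff.mp hs with h | h
      · exact ⟨fun _ => 0, fun _ => 0, by rw [h]; simp [eps, σZ]⟩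
      · exact ⟨fun _ => 0, fun _ => 1, by rw [h]; simp [eps, σZ]⟩
    have hmain := hL 1 (Matrix.of fun q r => Matrix.single b b' (1 : ℂ) q.1 r.1)
    rw [kron_parity] at hmain
    have hentry := Matrix.ext_iff.mpr hmain (a, c) (a', c')
    have hXE : matSlice c c'
        (Matrix.of fun q r : (Fin m → Fin 2) × (Fin 1 → Fin 2) =>
          Matrix.single b b' (1 : ℂ) q.1 r.1) = Matrix.single b b' (1 : ℂ) := rfl
    simp only [tensId_apply, matSlice_projSup, projSup_diagonal_apply, hXE, hcc,
      halfProj_stdBasis] at hentry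
    have haa : eps m a * eps m a' = -(eps m b * eps m b') :=
      (pm_cases (sq_one_mul (eps_sq a) (eps_sq a')) hs).resolve_left hne
    have hx : (eps m a * eps 1 c) * (eps m a' * eps 1 c') = -1 := by
      linear_combination (eps 1 c * eps 1 c') * haa - (eps m b * eps m b') * hcc - hs
    linear_combination hentry + (1 / 2 : ℂ) * (M (Matrix.single b b' (1 : ℂ)) a a') * hx
  · intro hR p X
    have hK := (commute_iff_K M).mp hR
    rw [kron_parity]
    ext ⟨a, b⟩ ⟨a', b'⟩
    simp only [tensId_apply, matSlice_projSup, projSup_diagonal_apply]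
    have hsb : (eps p b * eps p b') * (eps p b * eps p b') = 1 :=
      sq_one_mul (eps_sq b) (eps_sq b')
    rcases pm_cases (sq_one_mul (eps_sq a) (eps_sq a')) hsb with hu | hu
    · have hx : (eps m a * eps p b) * (eps m a' * eps p b') = 1 := by
        linear_combination (eps p b * eps p b') * hu + hsb
      rw [hx]; ring
    · have h0 : M (halfProj m (eps p b * eps p b') (matSlice b b' X)) a a' = 0 :=
        vanish M hK hsb _ a a' hu
      rw [h0]; ring
end
end

section
/- Two superselection-rule-valid maps acting on disjoint sets of fermion modes commute: work with m + p fermion modes (m, p ≥ 1) and their 2(m+p) Jordan–Wigner Majorana operators. Let M₁(X) = Σ χ¹_{ū,ū'} C_ū X C_ū', where the sum ranges over pairs of binary vectors ū, ū' ∈ {0,1}^{2(m+p)} that are supported on the first 2m coordinates (u_k = u'_k = 0 for k > 2m) and satisfy |ū| ≡ |ū'| (mod 2); let M₂(X) = Σ χ²_{v̄,v̄'} C_v̄ X C_v̄', where the sum ranges over pairs of binary vectors v̄, v̄' supported on the last 2p coordinates (v_k = v'_k = 0 for k ≤ 2m) and satisfying |v̄| ≡ |v̄'| (mod 2). Then M₁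 ∘ M₂ = M₂ ∘ M₁ as linear maps on 2^{m+p} × 2^{m+p} complex matrices. -/
open Matrix

noncomputable section

def σI : Matrix (Fin 2) (Fin 2) ℂ := 1
def σX : Matrix (Fin 2) (Fin 2) ℂ := !![0, 1; 1, 0]
def σY : Matrix (Fin 2) (Fin 2) ℂ := !![0, -Complex.I; Complex.I, 0]
/-- Tensor product over `m` qubit sites of single-site matrices. -/
def tensProd (m : ℕ) (f : Fin m → Matrix (Fin 2) (Fin 2) ℂ) :
    Matrix (Fin m → Fin 2) (Fin m → Fin 2) ℂ :=
  Matrix.of fun n n' => ∏ j, f j (n j) (n' j)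

/-- Jordan–Wigner Majorana operators, 0-indexed: `majorana m k` is `c_{k+1}`,
i.e. `c_{2i-1} = X_i Z_{i+1} ⋯ Z_m` and `c_{2i} = Y_i Z_{i+1} ⋯ Z_m`. -/
def majorana (m : ℕ) (k : Fin (2 * m)) :
    Matrix (Fin m → Fin 2) (Fin m → Fin 2) ℂ :=
  tensProd m fun j =>
    if (j : ℕ) < (k : ℕ) / 2 then σI
    else if (j : ℕ) = (k : ℕ) / 2 then (if (k : ℕ) % 2 = 0 then σX else σY)
    else σZ

/-- Hamming weight of a binary vector. -/
def hw {n : ℕ} (u : Fin n → Bool) : ℕ := ∑ k, if u k then 1 else 0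

/-- Majorana product operator `C_ū = i^⌊|ū|/2⌋ c_1^{u_1} ⋯ c_{2m}^{u_{2m}}`. -/
def Cu (m : ℕ) (u : Fin (2 * m) → Bool) :
    Matrix (Fin m → Fin 2) (Fin m → Fin 2) ℂ :=
  Complex.I ^ (hw u / 2) •
    ((List.finRange (2 * m)).map fun k => if u k then majorana m k else 1).prod

/-- The linear map `X ↦ ∑_{ū,ū'} χ_{ū,ū'} C_ū X C_ū'` determined by a chi matrix. -/
def chiMap (m : ℕ) (χ : (Fin (2 * m) → Bool) → (Fin (2 * m) → Bool) → ℂ) :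
    Matrix (Fin m → Fin 2) (Fin m → Fin 2) ℂ →ₗ[ℂ]
      Matrix (Fin m → Fin 2) (Fin m → Fin 2) ℂ where
  toFun X := ∑ u, ∑ u', χ u u' • (Cu m u * X * Cu m u')
  map_add' X Y := by
    simp [Matrix.mul_add, Matrix.add_mul, smul_add, Finset.sum_add_distrib]
  map_smul' c X := by
    simp [Matrix.mul_smul, Matrix.smul_mul, Finset.smul_sum, smul_smul, mul_comm]

lemma tensProd_mul (m : ℕ) (f g : Fin m → Matrix (Fin 2) (Fin 2) ℂ) :
    tensProd m f * tensProd m g = tensProd m (fun j => f j * g j) := by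
  ext n n'
  simp only [tensProd, Matrix.mul_apply, Matrix.of_apply]
  rw [Finset.prod_univ_sum (fun _ => Finset.univ) (fun j a => f j (n j) a * g j a (n' j)),
    Fintype.piFinset_univ]
  exact (Finset.sum_congr rfl fun x _ => Finset.prod_mul_distrib).symm

lemma pauli_ZX : σZ * σX = -(σX * σZ) := by
  simp [σZ, σX, Matrix.mul_fin_two]

lemma pauli_ZY : σZ * σY = -(σY * σZ) := by
  simp [σZ, σY, Matrix.mul_fin_two]

lemma majorana_anticomm (n : ℕ) (j k : Fin (2 * n)) (h : (j : ℕ) / 2 < (k : ℕ) / 2) :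
    majorana n j * majorana n k = -(majorana n k * majorana n j) := by
  set A : Fin n → Matrix (Fin 2) (Fin 2) ℂ := fun t =>
    if (t : ℕ) < (j : ℕ) / 2 then σI
    else if (t : ℕ) = (j : ℕ) / 2 then (if (j : ℕ) % 2 = 0 then σX else σY)
    else σZ with hA
  set B : Fin n → Matrix (Fin 2) (Fin 2) ℂ := fun t =>
    if (t : ℕ) < (k : ℕ) / 2 then σI
    else if (t : ℕ) = (k : ℕ) / 2 then (if (k : ℕ) % 2 = 0 then σX else σY)
    else σZ with hB
  have hne : (j : ℕ) / 2 ≠ (k : ℕ) / 2 := h.ne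
  have hne' : (k : ℕ) / 2 ≠ (j : ℕ) / 2 := h.ne'
  have hnl : ¬ (k : ℕ) / 2 < (j : ℕ) / 2 := by omega
  have key : ∀ t : Fin n, A t * B t =
      (if (t : ℕ) = (k : ℕ) / 2 then (-1 : ℂ) else 1) • (B t * A t) := by
    intro t
    rcases lt_trichotomy ((t : ℕ)) ((j : ℕ) / 2) with ht | ht | ht
    · have ht2 : (t : ℕ) < (k : ℕ) / 2 := ht.trans h
      simp [hA, hB, ht, ht2, ht2.ne, σI]
    · have ht2 : (t : ℕ) < (k : ℕ) / 2 := ht ▸ h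
      simp [hA, hB, ht, ht2, ht2.ne, h, hne, hne', hnl, σI]
    · have ht1 : ¬ (t : ℕ) < (j : ℕ) / 2 := by omega
      have ht1' : ¬ (t : ℕ) = (j : ℕ) / 2 := by omega
      rcases lt_trichotomy ((t : ℕ)) ((k : ℕ) / 2) with ht2 | ht2 | ht2
      · simp [hA, hB, ht1, ht1', ht2, ht2.ne, σI]
      · rcases Nat.even_or_odd (k : ℕ) with hk | hk
        · have h0 : (k : ℕ) % 2 = 0 := Nat.even_iff.mp hk
          simp [hA, hB, ht1, ht1', ht2, h0, h, hne, hne', hnl, pauli_ZX]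
        · have h1 : (k : ℕ) % 2 = 1 := Nat.odd_iff.mp hk
          have h0 : ¬ (k : ℕ) % 2 = 0 := by omega
          simp [hA, hB, ht1, ht1', ht2, h0, h, hne, hne', hnl, pauli_ZY]
      · have : ¬ (t:ℕ) < (k:ℕ)/2 := by omega
        simp [hA, hB, ht1, ht1', this, ht2.ne', σI]
  have hk2 : (k : ℕ) / 2 < n := by
    have := k.isLt; omega
  have : majorana n j * majorana n k = tensProd n (fun t => A t * B t) := tensProd_mul ..
  rw [this]
  have : majorana n k * majorana n j = tensProd n (fun t => B t * A t) := tensProd_mul ..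
  rw [this]
  ext x y
  simp only [tensProd, Matrix.of_apply, Matrix.neg_apply]
  have : ∀ t : Fin n, (A t * B t) (x t) (y t) =
      (if (t : ℕ) = (k : ℕ) / 2 then (-1 : ℂ) else 1) * (B t * A t) (x t) (y t) := by
    intro t
    rw [key t]
    simp
  rw [Finset.prod_congr rfl fun t _ => this t, Finset.prod_mul_distrib]
  have : (∏ t : Fin n, if (t : ℕ) = (k : ℕ) / 2 then (-1 : ℂ) else 1) = -1 := by
    rw [show (fun t : Fin n => if (t : ℕ) = (k : ℕ) / 2 then (-1 : ℂ) else 1)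
        = fun t : Fin n => if t = ⟨(k : ℕ) / 2, hk2⟩ then (-1 : ℂ) else 1 from
      funext fun t => by simp [Fin.ext_iff]]
    simp
  rw [this]
  ring

lemma list_prod_comm {d : Type*} [Fintype d] [DecidableEq d] {ι : Type*}
    (B : Matrix d d ℂ) (F : ι → Matrix d d ℂ) (ε : ι → ℂ) :
    ∀ (l : List ι), (∀ a ∈ l, F a * B = ε a • (B * F a)) →
      (l.map F).prod * B = (l.map ε).prod • (B * (l.map F).prod)
  | [], _ => by simp
  | a :: l, h => by
    have ih := list_prod_comm B F ε l (fun b hb => h b (List.mem_cons_of_mem a hb))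
    simp only [List.map_cons, List.prod_cons]
    rw [mul_assoc, ih, Matrix.mul_smul, ← mul_assoc, h a List.mem_cons_self,
      Matrix.smul_mul, smul_smul, mul_assoc, mul_comm ((List.map ε l).prod) (ε a)]

/-- product of the sign list -/
lemma sign_prod {n : ℕ} (u : Fin n → Bool) (s : ℂ) :
    ((List.finRange n).map fun k => if u k then s else 1).prod = s ^ hw u := by
  rw [← Fin.prod_univ_def, Finset.prod_ite, Finset.prod_const, Finset.prod_const_one, mul_one]
  congr 1
  rw [hw, Finset.card_filter]

def Pl (m : ℕ) (u : Fin (2 * m) → Bool) : Matrix (Fin m → Fin 2) (Fin m → Fin 2) ℂ :=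
  ((List.finRange (2 * m)).map fun k => if u k then majorana m k else 1).prod

lemma Cu_eq (m : ℕ) (u : Fin (2 * m) → Bool) :
    Cu m u = Complex.I ^ (hw u / 2) • Pl m u := rfl

lemma neg_one_sq_pow (h : ℕ) : ((-1 : ℂ) ^ h) * ((-1 : ℂ) ^ h) = 1 := by
  rw [← pow_add]
  exact Even.neg_one_pow ⟨h, rfl⟩

lemma Pl_comm_majorana {n m : ℕ} (u : Fin (2 * n) → Bool)
    (hu : ∀ k : Fin (2 * n), 2 * m ≤ (k : ℕ) → u k = false)
    (k : Fin (2 * n)) (hk : 2 * m ≤ (k : ℕ)) :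
    Pl n u * majorana n k = ((-1 : ℂ) ^ hw u) • (majorana n k * Pl n u) := by
  rw [Pl, list_prod_comm (majorana n k)
      (fun j => if u j then majorana n j else 1)
      (fun j => if u j then (-1 : ℂ) else 1) (List.finRange (2 * n)) ?_,
    sign_prod]
  intro j _
  by_cases hj : u j
  · simp only [hj, if_true]
    have hjm : (j : ℕ) < 2 * m := by
      by_contra hc
      exact absurd (hu j (by omega)) (by simp [hj])
    have : (j : ℕ) / 2 < (k : ℕ) / 2 := by omega
    rw [majorana_anticomm n j k this]
    simp
  · simp [hj]

lemma majorana_comm_Pl {n m : ℕ} (u : Fin (2 * n) → Bool)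
    (hu : ∀ k : Fin (2 * n), 2 * m ≤ (k : ℕ) → u k = false)
    (k : Fin (2 * n)) (hk : 2 * m ≤ (k : ℕ)) :
    majorana n k * Pl n u = ((-1 : ℂ) ^ hw u) • (Pl n u * majorana n k) := by
  have h1 := Pl_comm_majorana (m := m) u hu k hk
  calc majorana n k * Pl n u
      = ((-1 : ℂ) ^ hw u) • (((-1 : ℂ) ^ hw u) • (majorana n k * Pl n u)) := by
        rw [smul_smul, neg_one_sq_pow, one_smul]
    _ = ((-1 : ℂ) ^ hw u) • (Pl n u * majorana n k) := by rw [← h1]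

lemma Pl_comm_Pl {n m : ℕ} (u v : Fin (2 * n) → Bool)
    (hu : ∀ k : Fin (2 * n), 2 * m ≤ (k : ℕ) → u k = false)
    (hv : ∀ k : Fin (2 * n), (k : ℕ) < 2 * m → v k = false) :
    Pl n u * Pl n v = ((-1 : ℂ) ^ (hw u * hw v)) • (Pl n v * Pl n u) := by
  have h2 : Pl n v * Pl n u = ((-1 : ℂ) ^ (hw u * hw v)) • (Pl n u * Pl n v) := by
    have key : Pl n v * Pl n u =
        (((List.finRange (2 * n)).map fun j =>
          if v j then ((-1 : ℂ) ^ hw u) else 1).prod) • (Pl n u * Pl n v) :=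
      list_prod_comm (Pl n u) (fun j => if v j then majorana n j else 1)
        (fun j => if v j then ((-1 : ℂ) ^ hw u) else 1) (List.finRange (2 * n)) ?_
    rw [key, sign_prod, ← pow_mul, mul_comm (hw u)]
    intro j _
    by_cases hj : v j
    · simp only [hj, if_true]
      have hjm : 2 * m ≤ (j : ℕ) := by
        by_contra hc
        exact absurd (hv j (by omega)) (by simp [hj])
      exact majorana_comm_Pl (m := m) u hu j hjm
    · simp [hj]
  calc Pl n u * Pl n v
      = ((-1 : ℂ) ^ (hw u * hw v)) • (((-1 : ℂ) ^ (hw u * hw v)) • (Pl n u * Pl n v)) := by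
        rw [smul_smul, neg_one_sq_pow, one_smul]
    _ = _ := by rw [← h2]

lemma Cu_comm {n m : ℕ} (u v : Fin (2 * n) → Bool)
    (hu : ∀ k : Fin (2 * n), 2 * m ≤ (k : ℕ) → u k = false)
    (hv : ∀ k : Fin (2 * n), (k : ℕ) < 2 * m → v k = false) :
    Cu n u * Cu n v = ((-1 : ℂ) ^ (hw u * hw v)) • (Cu n v * Cu n u) := by
  rw [Cu_eq, Cu_eq, Matrix.smul_mul, Matrix.mul_smul, Pl_comm_Pl u v hu hv,
    Matrix.smul_mul, Matrix.mul_smul]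
  rw [smul_smul, smul_smul, smul_smul, smul_smul]
  ring_nf

theorem valid_maps_on_disjoint_modes_commute (m p : ℕ) (hm : 1 ≤ m) (hp : 1 ≤ p)
    (χ₁ χ₂ : (Fin (2 * (m + p)) → Bool) → (Fin (2 * (m + p)) → Bool) → ℂ)
    (h₁ : ∀ u u', χ₁ u u' ≠ 0 →
      (∀ k : Fin (2 * (m + p)), 2 * m ≤ (k : ℕ) → u k = false ∧ u' k = false) ∧
        hw u % 2 = hw u' % 2)
    (h₂ : ∀ v v', χ₂ v v' ≠ 0 →
      (∀ k : Fin (2 * (m + p)), (k : ℕ) < 2 * m → v k = false ∧ v' k = false) ∧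
        hw v % 2 = hw v' % 2)
    (X : Matrix (Fin (m + p) → Fin 2) (Fin (m + p) → Fin 2) ℂ) :
    chiMap (m + p) χ₁ (chiMap (m + p) χ₂ X) =
      chiMap (m + p) χ₂ (chiMap (m + p) χ₁ X) := by
  have main : ∀ u u', χ₁ u u' • (Cu (m + p) u * (chiMap (m + p) χ₂ X) * Cu (m + p) u')
      = χ₁ u u' • chiMap (m + p) χ₂ (Cu (m + p) u * X * Cu (m + p) u') := by
    intro u u'
    by_cases h : χ₁ u u' = 0
    · simp [h]
    · obtain ⟨hsupp, hpar⟩ := h₁ u u' h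
      congr 1
      show Cu (m + p) u * (∑ v, ∑ v', χ₂ v v' • (Cu (m + p) v * X * Cu (m + p) v')) * Cu (m + p) u'
        = ∑ v, ∑ v', χ₂ v v' • (Cu (m + p) v * (Cu (m + p) u * X * Cu (m + p) u') * Cu (m + p) v')
      simp only [Matrix.mul_sum, Matrix.sum_mul, Matrix.mul_smul, Matrix.smul_mul]
      refine Finset.sum_congr rfl fun v _ => Finset.sum_congr rfl fun v' _ => ?_
      by_cases h2 : χ₂ v v' = 0
      · simp [h2]
      · obtain ⟨hsupp2, hpar2⟩ := h₂ v v' h2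
        congr 1
        have c1 : Cu (m + p) u * Cu (m + p) v = ((-1 : ℂ) ^ (hw u * hw v)) • (Cu (m + p) v * Cu (m + p) u) :=
          Cu_comm u v (fun k hk => (hsupp k hk).1) (fun k hk => (hsupp2 k hk).1)
        have c2 : Cu (m + p) u' * Cu (m + p) v' = ((-1 : ℂ) ^ (hw u' * hw v')) • (Cu (m + p) v' * Cu (m + p) u') :=
          Cu_comm u' v' (fun k hk => (hsupp k hk).2) (fun k hk => (hsupp2 k hk).2)
        have c2' : Cu (m + p) v' * Cu (m + p) u' = ((-1 : ℂ) ^ (hw u' * hw v')) • (Cu (m + p) u' * Cu (m + p) v') := by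
          calc Cu (m + p) v' * Cu (m + p) u'
              = ((-1 : ℂ) ^ (hw u' * hw v')) •
                (((-1 : ℂ) ^ (hw u' * hw v')) • (Cu (m + p) v' * Cu (m + p) u')) := by
                rw [smul_smul, neg_one_sq_pow, one_smul]
            _ = _ := by rw [← c2]
        have hev : Even (hw u * hw v + hw u' * hw v') := by
          rw [Nat.even_add, Nat.even_mul, Nat.even_mul, Nat.even_iff, Nat.even_iff,
            Nat.even_iff, Nat.even_iff, hpar, hpar2]
        calc Cu (m + p) u * (Cu (m + p) v * X * Cu (m + p) v') * Cu (m + p) u'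
            = Cu (m + p) u * Cu (m + p) v * X * (Cu (m + p) v' * Cu (m + p) u') := by
              simp only [mul_assoc]
          _ = (((-1 : ℂ) ^ (hw u * hw v)) * ((-1 : ℂ) ^ (hw u' * hw v'))) •
              (Cu (m + p) v * Cu (m + p) u * X * (Cu (m + p) u' * Cu (m + p) v')) := by
              rw [c1, c2']
              simp only [Matrix.smul_mul, Matrix.mul_smul, smul_smul]
              try rw [mul_comm]
          _ = Cu (m + p) v * Cu (m + p) u * X * (Cu (m + p) u' * Cu (m + p) v') := by
              rw [← pow_add, Even.neg_one_pow hev, one_smul]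
          _ = Cu (m + p) v * (Cu (m + p) u * X * Cu (m + p) u') * Cu (m + p) v' := by
              simp only [mul_assoc]
  calc chiMap (m + p) χ₁ (chiMap (m + p) χ₂ X)
      = ∑ u, ∑ u', χ₁ u u' • (Cu (m + p) u * (chiMap (m + p) χ₂ X) * Cu (m + p) u') := rfl
    _ = ∑ u, ∑ u', χ₁ u u' • chiMap (m + p) χ₂ (Cu (m + p) u * X * Cu (m + p) u') :=
        Finset.sum_congr rfl fun u _ => Finset.sum_congr rfl fun u' _ => main u u'
    _ = chiMap (m + p) χ₂ (∑ u, ∑ u', χ₁ u u' • (Cu (m + p) u * X * Cu (m + p) u')) := by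
        simp [map_sum, _root_.map_smul]
    _ = chiMap (m + p) χ₂ (chiMap (m + p) χ₁ X) := rfl
end
end
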